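/- Let M be the limit of a weak Fraïssé class in a finite relational signature. If M is ω-categorical, then M is model-complete, i.e., whenever N ⊆ N' are two models of Th(M), N is an elementary substructure of N'. -/

import Mathlib

open FirstOrder FirstOrder.Language Set CategoryTheory

namespace WeakFraisse

/-- A class of (bundled) structures has the weak amalgamation property WAP. -/
def HasWAPClass (L : FirstOrder.Language) (K : Set (Bundled.{0} L.Structure)) : Prop :=
  ∀ A, A ∈ K → ∃ A', A' ∈ K ∧ ∃ τ : A ↪[L] A',
    ∀ B₁, B₁ ∈ K → ∀ B₂, B₂ ∈ K → ∀ (φ₁ : A' ↪[L] B₁) (φ₂ : A' ↪[L] B₂),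
      ∃ C, C ∈ K ∧ ∃ (ψ₁ : B₁ ↪[L] C) (ψ₂ : B₂ ↪[L] C),
        (ψ₁.comp φ₁).comp τ = (ψ₂.comp φ₂).comp τ

/-- A weak Fraïssé class: a nonempty class of finitely generated structures, countable
up to isomorphism, with the hereditary property, the joint embedding property and the
weak amalgamation property. -/
def IsWeakFraisseClass (L : FirstOrder.Language) (K : Set (Bundled.{0} L.Structure)) : Prop :=
  K.Nonempty ∧
  (∀ A : Bundled.{0} L.Structure, A ∈ K → Structure.FG L A) ∧
  (∃ f : ℕ → Bundled.{0} L.Structure, ∀ A ∈ K, ∃ n, Nonempty (A ≃[L] f n)) ∧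
  Hereditary K ∧ JointEmbedding K ∧ HasWAPClass L K

/-- `M` is the (Krawczyk–Kubiś) limit of the weak Fraïssé class `K`: it is countable,
has age `K`, and is weakly homogeneous: every finitely generated substructure `A` of
`M` is contained in a finitely generated substructure `B` such that every `C ∈ K`
extending `B` admits an embedding into `M` which is the identity on `A`. -/
def IsWeakFraisseLimit (L : FirstOrder.Language) (K : Set (Bundled.{0} L.Structure))
    (M : Type) [L.Structure M] : Prop :=
  Countable M ∧ L.age M = K ∧
    ∀ A : L.Substructure M, A.FG →
      ∃ B : L.Substructure M, B.FG ∧ ∃ hAB : A ≤ B,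
        ∀ C : Bundled.{0} L.Structure, C ∈ K → ∀ g : B ↪[L] C,
          ∃ h : C ↪[L] M, ∀ (a : M) (ha : a ∈ A), h (g ⟨a, hAB ha⟩) = a

/-- A theory is ω-categorical if all its countable models are isomorphic. -/
def OmegaCategorical (L : FirstOrder.Language) (T : L.Theory) : Prop :=
  ∀ (N₁ N₂ : Type) [L.Structure N₁] [L.Structure N₂],
    Countable N₁ → Countable N₂ → N₁ ⊨ T → N₂ ⊨ T → Nonempty (N₁ ≃[L] N₂)

/-- A theory is model complete if every embedding between its models is elementary. -/
def ModelComplete (L : FirstOrder.Language) (T : L.Theory) : Prop :=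
  ∀ (N N' : Type) [L.Structure N] [L.Structure N'],
    N ⊨ T → N' ⊨ T → ∀ f : N ↪[L] N', ∀ (n : ℕ) (φ : L.Formula (Fin n)) (x : Fin n → N),
      φ.Realize ((f : N → N') ∘ x) ↔ φ.Realize x

end WeakFraisse

namespace WeakFraisse

open FirstOrder.Language.Substructure

section Aux

universe u v

variable {L : FirstOrder.Language.{u, v}} {K : Set (Bundled.{0} L.Structure)}
variable {M : Type} [L.Structure M]

/-- `B` is a witness for `A`: every `K`-extension of `B` re-embeds into `M` fixing `A`
pointwise. -/
def IsWit (K : Set (Bundled.{0} L.Structure)) (A B : L.Substructure M) : Prop :=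
  B.FG ∧ ∀ C : Bundled.{0} L.Structure, C ∈ K → ∀ g : B ↪[L] C,
    ∃ h : C ↪[L] M, ∀ z : B, (z : M) ∈ A → h (g z) = (z : M)

lemma isWit_mono {A A' B : L.Substructure M} (h : IsWit K A B) (hle : A' ≤ A) :
    IsWit K A' B :=
  ⟨h.1, fun C hC g => (h.2 C hC g).imp fun _ hh' z hz => hh' z (hle hz)⟩

lemma exists_isWit (hM : IsWeakFraisseLimit L K M) {A : L.Substructure M} (hA : A.FG) :
    ∃ B, A ≤ B ∧ IsWit K A B := by
  obtain ⟨B, hBfg, hAB, hB⟩ := hM.2.2 A hA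
  refine ⟨B, hAB, hBfg, fun C hC g => ?_⟩
  obtain ⟨h, hh⟩ := hB C hC g
  refine ⟨h, fun z hz => ?_⟩
  have := hh z hz
  rwa [show (⟨(z : M), hAB hz⟩ : B) = z from Subtype.ext rfl] at this

lemma mem_K_of_fg (hM : IsWeakFraisseLimit L K M) {E : L.Substructure M} (hE : E.FG) :
    Bundled.mk (↥E) ∈ K :=
  hM.2.1 ▸ age.fg_substructure hE

/-- Transport principle: if `B` witnesses `A` and `e` is any placement of `B` in `M`,
then any finitely generated substructure `E` containing the image of `e` re-embeds
into `M` sending `e z` back to `z` for `z ∈ A`. -/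
lemma wit_transport (hM : IsWeakFraisseLimit L K M) {A W : L.Substructure M}
    (hW : IsWit K A W) (e : W ↪[L] M) {E : L.Substructure M} (hE : E.FG)
    (hle : ∀ z : W, e z ∈ E) :
    ∃ h : E ↪[L] M, ∀ z : W, (z : M) ∈ A → h ⟨e z, hle z⟩ = (z : M) := by
  obtain ⟨h, hh⟩ := hW.2 (Bundled.mk ↥E) (mem_K_of_fg hM hE) (e.codRestrict E hle)
  refine ⟨h, fun z hz => ?_⟩
  have := hh z hz
  rwa [Embedding.codRestrict_apply'] at this

/-- The pivotal relation: the list `l` of pairs is "conjugation-ready": there is a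
finitely generated substructure `V` containing all second coordinates, witnessing
their generated substructure, and an embedding `v : V ↪ M` carrying each second
coordinate to the corresponding first coordinate. -/
def Conj (K : Set (Bundled.{0} L.Structure)) (l : List (M × M)) : Prop :=
  ∃ (V : L.Substructure M) (hl : ∀ p ∈ l, p.2 ∈ V) (v : V ↪[L] M),
    IsWit K (closure L (Prod.snd '' {p : M × M | p ∈ l})) V ∧
    ∀ (p : M × M) (hp : p ∈ l), v ⟨p.2, hl p hp⟩ = p.1

lemma sndSet_finite (l : List (M × M)) : (Prod.snd '' {p : M × M | p ∈ l}).Finite :=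
  l.finite_toSet.image _

lemma conj_seed (hM : IsWeakFraisseLimit L K M) (g : M ↪[L] M) (l : List M) :
    Conj K (l.map fun x => (x, g x)) := by
  obtain ⟨W, hAW, hWwit⟩ := exists_isWit hM (fg_closure l.finite_toSet (L := L))
  set e : W ↪[L] M := g.comp W.subtype with he
  obtain ⟨V, hDV, hVwit⟩ :=
    exists_isWit hM (Structure.FG.range ((fg_iff_structure_fg W).1 hWwit.1) e.toHom)
  have hle : ∀ z : W, e z ∈ V := fun z => hDV (Hom.mem_range.2 ⟨z, rfl⟩)
  obtain ⟨v, hv⟩ := wit_transport hM hWwit e hVwit.1 hle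
  have hmem : ∀ x ∈ l, x ∈ W := fun x hx => hAW (subset_closure hx)
  refine ⟨V, ?_, v, ?_, ?_⟩
  · rintro p hp
    obtain ⟨x, hx, rfl⟩ := List.mem_map.1 hp
    exact hle ⟨x, hmem x hx⟩
  · refine isWit_mono hVwit (closure_le.2 ?_)
    rintro y ⟨p, hp, rfl⟩
    obtain ⟨x, hx, rfl⟩ := List.mem_map.1 hp
    exact Hom.mem_range.2 ⟨⟨x, hmem x hx⟩, rfl⟩
  · rintro p hp
    obtain ⟨x, hx, rfl⟩ := List.mem_map.1 hp
    have hz : ((⟨x, hmem x hx⟩ : W) : M) ∈ closure L {y | y ∈ l} := subset_closure hx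
    have h' := hv ⟨x, hmem x hx⟩ hz
    convert h' using 2
    exact Subtype.ext rfl

lemma conj_flip (hM : IsWeakFraisseLimit L K M) {l : List (M × M)} (h : Conj K l) :
    Conj K (l.map Prod.swap) := by
  obtain ⟨V, hl, v, wit, hv⟩ := h
  obtain ⟨U, hDU, hUwit⟩ :=
    exists_isWit hM (Structure.FG.range ((fg_iff_structure_fg V).1 wit.1) v.toHom)
  have hle : ∀ z : V, v z ∈ U := fun z => hDU (Hom.mem_range.2 ⟨z, rfl⟩)
  obtain ⟨u, hu⟩ := wit_transport hM wit v hUwit.1 hle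
  refine ⟨U, ?_, u, ?_, ?_⟩
  · rintro p hp
    obtain ⟨q, hq, rfl⟩ := List.mem_map.1 hp
    show q.1 ∈ U
    rw [← hv q hq]; exact hle _
  · refine isWit_mono hUwit (closure_le.2 ?_)
    rintro y ⟨p, hp, rfl⟩
    obtain ⟨q, hq, rfl⟩ := List.mem_map.1 hp
    show q.1 ∈ (v.toHom.range : L.Substructure M)
    exact Hom.mem_range.2 ⟨⟨q.2, hl q hq⟩, hv q hq⟩
  · rintro p hp
    obtain ⟨q, hq, rfl⟩ := List.mem_map.1 hp
    have hz : ((⟨q.2, hl q hq⟩ : V) : M) ∈ closure L (Prod.snd '' {p : M × M | p ∈ l}) :=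
      subset_closure ⟨q, hq, rfl⟩
    have h' := hu ⟨q.2, hl q hq⟩ hz
    convert h' using 2
    exact Subtype.ext (hv q hq).symm
    rfl

lemma conj_forth (hM : IsWeakFraisseLimit L K M) {l : List (M × M)} (h : Conj K l)
    (m : M) : ∃ m', Conj K ((m, m') :: l) := by
  classical
  obtain ⟨V, hl, v, wit, hv⟩ := h
  have hAamfg : (closure L (insert m (Prod.fst '' {p : M × M | p ∈ l}))).FG :=
    fg_closure ((l.finite_toSet.image _).insert m)
  obtain ⟨Wst, hWle, hWwit⟩ := exists_isWit hM hAamfg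
  set E : L.Substructure M := v.toHom.range ⊔ Wst with hE
  have hEfg : E.FG :=
    (Structure.FG.range ((fg_iff_structure_fg V).1 wit.1) v.toHom).sup hWwit.1
  have hrle : v.toHom.range ≤ E := le_sup_left
  have hWstE : Wst ≤ E := le_sup_right
  have hle1 : ∀ z : V, v z ∈ E := fun z => hrle (Hom.mem_range.2 ⟨z, rfl⟩)
  obtain ⟨h1, hh1⟩ := wit_transport hM wit v hEfg hle1
  have hfstW : ∀ p ∈ l, p.1 ∈ Wst := fun p hp =>
    hWle (subset_closure (Set.mem_insert_iff.2 (Or.inr ⟨p, hp, rfl⟩)))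
  have hmW : m ∈ Wst := hWle (subset_closure (Set.mem_insert _ _))
  have hfirst : ∀ (p : M × M) (hp : p ∈ l), h1 ⟨p.1, hWstE (hfstW p hp)⟩ = p.2 := by
    intro p hp
    have hz : ((⟨p.2, hl p hp⟩ : V) : M) ∈ closure L (Prod.snd '' {p : M × M | p ∈ l}) :=
      subset_closure ⟨p, hp, rfl⟩
    have h' := hh1 ⟨p.2, hl p hp⟩ hz
    convert h' using 2
    exact Subtype.ext (hv p hp).symm
  set m' : M := h1 ⟨m, hWstE hmW⟩ with hm'
  set hhat : Wst ↪[L] M := h1.comp (Substructure.inclusion hWstE) with hhatdef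
  obtain ⟨V', hD'V', hV'wit⟩ :=
    exists_isWit hM (Structure.FG.range ((fg_iff_structure_fg Wst).1 hWwit.1) hhat.toHom)
  have hle2 : ∀ z : Wst, hhat z ∈ V' := fun z => hD'V' (Hom.mem_range.2 ⟨z, rfl⟩)
  obtain ⟨v', hv'⟩ := wit_transport hM hWwit hhat hV'wit.1 hle2
  have hhm : hhat ⟨m, hmW⟩ = m' := rfl
  have hhp : ∀ (p : M × M) (hp : p ∈ l), hhat ⟨p.1, hfstW p hp⟩ = p.2 :=
    fun p hp => hfirst p hp
  refine ⟨m', V', ?_, v', ?_, ?_⟩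
  · rintro p hp
    rcases List.mem_cons.1 hp with rfl | hp'
    · show m' ∈ V'
      rw [← hhm]; exact hle2 _
    · show p.2 ∈ V'
      rw [← hhp p hp']; exact hle2 _
  · refine isWit_mono hV'wit (closure_le.2 ?_)
    rintro y ⟨p, hp, rfl⟩
    rcases List.mem_cons.1 hp with rfl | hp'
    · show m' ∈ (hhat.toHom.range : L.Substructure M)
      exact Hom.mem_range.2 ⟨⟨m, hmW⟩, hhm⟩
    · show p.2 ∈ (hhat.toHom.range : L.Substructure M)
      exact Hom.mem_range.2 ⟨⟨p.1, hfstW p hp'⟩, hhp p hp'⟩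
  · rintro p hp
    rcases List.mem_cons.1 hp with rfl | hp'
    · have hz : ((⟨m, hmW⟩ : Wst) : M) ∈
          closure L (insert m (Prod.fst '' {p : M × M | p ∈ l})) :=
        subset_closure (Set.mem_insert _ _)
      have h' := hv' ⟨m, hmW⟩ hz
      convert h' using 2
      exact Subtype.ext rfl
    · have hz : ((⟨p.1, hfstW p hp'⟩ : Wst) : M) ∈
          closure L (insert m (Prod.fst '' {p : M × M | p ∈ l})) :=
        subset_closure (Set.mem_insert_iff.2 (Or.inr ⟨p, hp', rfl⟩))
      have h' := hv' ⟨p.1, hfstW p hp'⟩ hz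
      convert h' using 2
      exact Subtype.ext (hhp p hp').symm

lemma conj_back (hM : IsWeakFraisseLimit L K M) {l : List (M × M)} (h : Conj K l)
    (m' : M) : ∃ m, Conj K ((m, m') :: l) := by
  obtain ⟨m, hm⟩ := conj_forth hM (conj_flip hM h) m'
  have h2 := conj_flip hM hm
  have hl2 : ((m', m) :: l.map Prod.swap).map Prod.swap = (m, m') :: l := by
    simp [List.map_map, Function.comp_def]
  rw [hl2] at h2
  exact ⟨m, h2⟩

lemma conj_fun (hc : Conj K l) {p q : M × M} (hp : p ∈ l) (hq : q ∈ l)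
    (h : p.1 = q.1) : p.2 = q.2 := by
  obtain ⟨V, hl, v, _, hv⟩ := hc
  have : v ⟨p.2, hl p hp⟩ = v ⟨q.2, hl q hq⟩ := by rw [hv p hp, hv q hq, h]
  exact congrArg Subtype.val (v.injective this)

lemma conj_inj (hc : Conj K l) {p q : M × M} (hp : p ∈ l) (hq : q ∈ l)
    (h : p.2 = q.2) : p.1 = q.1 := by
  obtain ⟨V, hl, v, _, hv⟩ := hc
  rw [← hv p hp, ← hv q hq]
  exact congrArg v (Subtype.ext h)

lemma conj_rel (hc : Conj K l) {j : ℕ} (r : L.Relations j) (c : Fin j → M × M)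
    (hcm : ∀ i, c i ∈ l) :
    Structure.RelMap r (fun i => (c i).1) ↔ Structure.RelMap r (fun i => (c i).2) := by
  obtain ⟨V, hl, v, _, hv⟩ := hc
  have h1 : (fun i => (c i).1) = v ∘ fun i => (⟨(c i).2, hl _ (hcm i)⟩ : V) :=
    funext fun i => (hv _ (hcm i)).symm
  rw [h1, Embedding.map_rel]
  exact Iff.rfl

/-- From a conjugation-ready list one obtains an automorphism of `M` realizing the
pairing. -/
lemma conj_auto (hM : IsWeakFraisseLimit L K M) [L.IsRelational] {l₀ : List (M × M)}
    (h₀ : Conj K l₀) :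
    ∃ σ : M ≃[L] M, ∀ p ∈ l₀, σ p.1 = p.2 := by
  classical
  cases isEmpty_or_nonempty M with
  | inl hemp => exact ⟨FirstOrder.Language.Equiv.refl L M, fun p _ => isEmptyElim p.1⟩
  | inr hne =>
    have hcnt : Countable M := hM.1
    obtain ⟨u, hu⟩ := exists_surjective_nat M
    have hstep : ∀ (j : ℕ) (l : List (M × M)), ∃ l' : List (M × M),
        Conj K l → (Conj K l' ∧ (∀ p ∈ l, p ∈ l') ∧
          (∃ p ∈ l', p.1 = u j) ∧ (∃ p ∈ l', p.2 = u j)) := by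
      intro j l
      by_cases hl : Conj K l
      · obtain ⟨m', h1⟩ := conj_forth hM hl (u j)
        obtain ⟨m2, h2⟩ := conj_back hM h1 (u j)
        exact ⟨(m2, u j) :: (u j, m') :: l, fun _ =>
          ⟨h2, fun p hp => by simp [hp], ⟨(u j, m'), by simp, rfl⟩,
            ⟨(m2, u j), by simp, rfl⟩⟩⟩
      · exact ⟨l, fun h => absurd h hl⟩
    choose F hF using hstep
    set c : ℕ → List (M × M) := fun n => Nat.rec l₀ (fun j ih => F j ih) n with hcdef
    have hcsucc : ∀ n, c (n + 1) = F n (c n) := fun n => rfl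
    have hconj : ∀ n, Conj K (c n) := by
      intro n
      induction n with
      | zero => exact h₀
      | succ n ih => rw [hcsucc]; exact (hF n (c n) ih).1
    have hmono : ∀ {n n'}, n ≤ n' → ∀ p ∈ c n, p ∈ c n' := by
      intro n n' hle
      induction hle with
      | refl => exact fun p hp => hp
      | step _ ih =>
        intro p hp
        rw [hcsucc]
        exact (hF _ _ (hconj _)).2.1 p (ih p hp)
    have htot1 : ∀ x : M, ∃ n, ∃ p ∈ c n, p.1 = x := by
      intro x
      obtain ⟨j, rfl⟩ := hu x
      refine ⟨j + 1, ?_⟩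
      rw [hcsucc]
      exact (hF j (c j) (hconj j)).2.2.1
    have htot2 : ∀ y : M, ∃ n, ∃ p ∈ c n, p.2 = y := by
      intro y
      obtain ⟨j, rfl⟩ := hu y
      refine ⟨j + 1, ?_⟩
      rw [hcsucc]
      exact (hF j (c j) (hconj j)).2.2.2
    choose nf pf hpf hfst using htot1
    choose ng pg hpg hsnd using htot2
    set f : M → M := fun x => (pf x).2 with hfdef
    set f' : M → M := fun y => (pg y).1 with hf'def
    -- pair transfer to any later stage
    have key : ∀ {n} {p : M × M}, p ∈ c n → f p.1 = p.2 := by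
      intro n p hp
      have h1 : pf p.1 ∈ c (max n (nf p.1)) := hmono (le_max_right _ _) _ (hpf p.1)
      have h2 : p ∈ c (max n (nf p.1)) := hmono (le_max_left _ _) _ hp
      exact conj_fun (hconj _) h1 h2 (hfst p.1)
    have key' : ∀ {n} {p : M × M}, p ∈ c n → f' p.2 = p.1 := by
      intro n p hp
      have h1 : pg p.2 ∈ c (max n (ng p.2)) := hmono (le_max_right _ _) _ (hpg p.2)
      have h2 : p ∈ c (max n (ng p.2)) := hmono (le_max_left _ _) _ hp
      exact conj_inj (hconj _) h1 h2 (hsnd p.2)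
    have hleft : Function.LeftInverse f' f := by
      intro x
      have h := key' (hpf x)
      rwa [hfst x] at h
    have hright : Function.RightInverse f' f := by
      intro y
      have h := key (hpg y)
      rw [hsnd y] at h
      exact h
    have hrel : ∀ {j} (r : L.Relations j) (x : Fin j → M),
        Structure.RelMap r (f ∘ x) ↔ Structure.RelMap r x := by
      intro j r x
      set N : ℕ := (Finset.univ : Finset (Fin j)).sup fun i => nf (x i) with hN
      have hmem : ∀ i, pf (x i) ∈ c N :=
        fun i => hmono (Finset.le_sup (Finset.mem_univ i)) _ (hpf (x i))
      have := conj_rel (hconj N) r (fun i => pf (x i)) hmem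
      have e1 : (fun i => (pf (x i)).1) = x := funext fun i => hfst (x i)
      have e2 : (fun i => (pf (x i)).2) = f ∘ x := funext fun i => rfl
      rw [e1, e2] at this
      exact this.symm
    refine ⟨⟨⟨f, f', hleft, hright⟩, ?_, ?_⟩, ?_⟩
    · intro n F' x
      exact isEmptyElim F'
    · intro n r x
      exact hrel r x
    · intro p hp
      exact key (n := 0) hp

lemma self_embedding_elementary (hM : IsWeakFraisseLimit L K M) [L.IsRelational]
    (g : M ↪[L] M) {n : ℕ} (φ : L.Formula (Fin n)) (t : Fin n → M) :
    φ.Realize ((g : M → M) ∘ t) ↔ φ.Realize t := by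
  obtain ⟨σ, hσ⟩ := conj_auto hM (conj_seed hM g (List.ofFn t))
  have hgt : (g : M → M) ∘ t = (σ : M → M) ∘ t := by
    funext i
    have : (t i, g (t i)) ∈ (List.ofFn t).map fun x => (x, g x) :=
      List.mem_map.2 ⟨t i, List.mem_ofFn.2 ⟨i, rfl⟩, rfl⟩
    exact (hσ _ this).symm
  rw [hgt]
  exact StrongHomClass.realize_formula σ φ

/-- Downward Löwenheim–Skolem packaged: a countable elementary substructure containing
a given countable set. -/
lemma exists_countable_elementarySubstructure [Finite L.Symbols]
    {N : Type} [L.Structure N] (s : Set N) (hs : s.Countable) :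
    ∃ S : L.ElementarySubstructure N, s ⊆ S ∧ Countable S := by
  by_cases hN : Countable N
  · refine ⟨⊤, fun x _ => ElementarySubstructure.mem_top x, ?_⟩
    exact inferInstance
  · have hinf : Infinite N := by
      by_contra hfin
      rw [not_infinite_iff_finite] at hfin
      exact hN hfin.to_countable
    have h1 : (Cardinal.aleph0.{0}) ≤ Cardinal.mk N := Cardinal.infinite_iff.1 hinf
    have hcardL : Cardinal.lift.{0} L.card ≤
        Cardinal.lift.{max u v} (Cardinal.aleph0.{0}) := by
      rw [Cardinal.lift_aleph0]
      have h2 : Countable L.Symbols := Finite.to_countable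
      have h3 : L.card ≤ Cardinal.aleph0 := Cardinal.mk_le_aleph0
      simpa using h3
    obtain ⟨S, hsS, hScard⟩ := exists_elementarySubstructure_card_eq L s
      Cardinal.aleph0 le_rfl
      (by simpa using (Cardinal.mk_le_aleph0_iff.2 hs.to_subtype)) hcardL
      (by simpa using h1)
    refine ⟨S, hsS, ?_⟩
    have h4 : Cardinal.mk S ≤ Cardinal.aleph0 := by
      simpa using le_of_eq hScard
    exact Cardinal.mk_le_aleph0_iff.1 h4

end Aux

/-- **Corollary (co:ModCom).**  Let `M` be the limit of a weak Fraïssé class in a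
finite relational signature.  If `M` is ω-categorical, then `M` is model complete. -/
theorem limit_omegaCategorical_modelComplete {L : FirstOrder.Language} [L.IsRelational]
    [Finite L.Symbols] {K : Set (Bundled.{0} L.Structure)} {M : Type} [L.Structure M]
    (hK : IsWeakFraisseClass L K) (hM : IsWeakFraisseLimit L K M)
    (hcat : OmegaCategorical L (L.completeTheory M)) :
    ModelComplete L (L.completeTheory M) := by
  intro N N' _ _ hN hN' f n φ x
  haveI : N ⊨ L.completeTheory M := hN
  haveI : N' ⊨ L.completeTheory M := hN'
  obtain ⟨S, hxS, hScnt⟩ :=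
    exists_countable_elementarySubstructure (L := L) (Set.range x) (Set.countable_range x)
  haveI := hScnt
  obtain ⟨S', hfS', hS'cnt⟩ := exists_countable_elementarySubstructure (L := L)
    (Set.range fun z : S => f z) (Set.countable_range _)
  haveI := hS'cnt
  obtain ⟨i⟩ := hcat S M hScnt hM.1 inferInstance inferInstance
  obtain ⟨i'⟩ := hcat S' M hS'cnt hM.1 inferInstance inferInstance
  set f₀ : S ↪[L] S' :=
    (f.comp (S : L.Substructure N).subtype).codRestrict
      (S' : L.Substructure N') (fun z => hfS' ⟨z, rfl⟩) with hf₀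
  set g : M ↪[L] M := (i'.toEmbedding.comp f₀).comp i.symm.toEmbedding with hg
  set x₀ : Fin n → S := fun j => ⟨x j, hxS (Set.mem_range_self j)⟩ with hx₀
  have e1 : (((↑) : S → N) ∘ x₀) = x := funext fun j => rfl
  have h1 : φ.Realize x ↔ φ.Realize x₀ := by
    rw [← e1]; exact S.isElementary φ x₀
  have h2 : φ.Realize x₀ ↔ φ.Realize ((i : S → M) ∘ x₀) :=
    (StrongHomClass.realize_formula i φ).symm
  have h3 : φ.Realize ((i : S → M) ∘ x₀) ↔
      φ.Realize ((g : M → M) ∘ ((i : S → M) ∘ x₀)) :=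
    (self_embedding_elementary hM g φ _).symm
  have h4 : (g : M → M) ∘ ((i : S → M) ∘ x₀) = (i' : S' → M) ∘ (f₀ ∘ x₀) := by
    funext j
    show g (i (x₀ j)) = i' (f₀ (x₀ j))
    rw [hg]
    simp
  have h5 : φ.Realize ((i' : S' → M) ∘ (f₀ ∘ x₀)) ↔ φ.Realize (f₀ ∘ x₀) :=
    StrongHomClass.realize_formula i' φ
  have e6 : (((↑) : S' → N') ∘ (f₀ ∘ x₀)) = (f : N → N') ∘ x := funext fun j => rfl
  have h6 : φ.Realize (f₀ ∘ x₀) ↔ φ.Realize ((f : N → N') ∘ x) := by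
    rw [← e6]; exact (S'.isElementary φ (f₀ ∘ x₀)).symm
  rw [h1, h2, h3, h4, h5, h6]

end WeakFraisse
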